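/- Let $\alpha \in (0,1)$, $\theta \in \left[\frac{\alpha}{2} - \frac{1-\alpha}{1+\alpha}, \frac{\alpha}{2}\right]$, and let $\omega_k$ be the coefficients of $\omega(\xi) = (1-\xi)^{\alpha}\left[1 + \left(\frac{\alpha}{2}-\theta\right)(1-\xi)\right]$. Then for every $n \geq 0$, the partial sum satisfies $\sum_{k=0}^{n} \omega_k > 0$. -/
import Mathlib


noncomputable def genBinom (α : ℝ) (k : ℕ) : ℝ :=
  (∏ j ∈ Finset.range k, (α - j)) / (Nat.factorial k)

noncomputable def kappa (α : ℝ) (k : ℕ) : ℝ := (-1 : ℝ) ^ k * genBinom α k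

/-- Coefficients of `ω(ξ) = (1-ξ)^α [1 + (α/2 - θ)(1-ξ)]`. -/
noncomputable def omegaCoeff (α θ : ℝ) : ℕ → ℝ
  | 0 => 1 + α / 2 - θ
  | (k + 1) => (1 + α / 2 - θ) * kappa α (k + 1) + (θ - α / 2) * kappa α k

noncomputable def Kprod (α : ℝ) (n : ℕ) : ℝ :=
  ∏ j ∈ Finset.range n, (((j : ℝ) + 1 - α) / ((j : ℝ) + 1))

lemma Kprod_pos {α : ℝ} (hα : α < 1) (n : ℕ) : 0 < Kprod α n := by
  apply Finset.prod_pos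
  intro j _
  have h1 : (0 : ℝ) < (j : ℝ) + 1 := by positivity
  have h2 : (0 : ℝ) < (j : ℝ) + 1 - α := by
    have : (0 : ℝ) ≤ (j : ℝ) := Nat.cast_nonneg j
    linarith
  exact div_pos h2 h1

lemma Kprod_succ (α : ℝ) (n : ℕ) :
    Kprod α (n + 1) = Kprod α n * (((n : ℝ) + 1 - α) / ((n : ℝ) + 1)) :=
  Finset.prod_range_succ _ _

lemma kappa_succ_eq (α : ℝ) (n : ℕ) :
    kappa α (n + 1) = -α / ((n : ℝ) + 1) * Kprod α n := by
  induction n with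
  | zero => simp [kappa, genBinom, Kprod]
  | succ m ih =>
    have hfacpos : (0 : ℝ) < (Nat.factorial (m + 1) : ℝ) := by positivity
    have hfac : (Nat.factorial (m + 2) : ℝ) = ((m : ℝ) + 2) * (Nat.factorial (m + 1)) := by
      rw [show m + 2 = (m + 1) + 1 from rfl, Nat.factorial_succ]
      push_cast
      ring
    have hk : kappa α (m + 2) = kappa α (m + 1) * (((m : ℝ) + 1 - α) / ((m : ℝ) + 2)) := by
      unfold kappa genBinom
      rw [Finset.prod_range_succ, hfac]
      have h2 : ((m : ℝ) + 2) ≠ 0 := by positivity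
      push_cast
      field_simp
      ring
    rw [hk, ih, Kprod_succ]
    have hm1 : ((m : ℝ) + 1) ≠ 0 := by positivity
    have hm2 : ((m : ℝ) + 2) ≠ 0 := by positivity
    have hcast : ((m + 1 : ℕ) : ℝ) = (m : ℝ) + 1 := by push_cast; ring
    rw [hcast]
    field_simp
    ring

lemma sum_kappa (α : ℝ) (n : ℕ) :
    ∑ k ∈ Finset.range (n + 1), kappa α k = Kprod α n := by
  induction n with
  | zero => simp [kappa, genBinom, Kprod]
  | succ m ih =>
    rw [Finset.sum_range_succ, ih, kappa_succ_eq, Kprod_succ]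
    have hm1 : ((m : ℝ) + 1) ≠ 0 := by positivity
    field_simp
    ring

lemma sum_omega (α θ : ℝ) (n : ℕ) :
    ∑ k ∈ Finset.range (n + 1), omegaCoeff α θ k
      = (1 + α / 2 - θ) * (∑ k ∈ Finset.range (n + 1), kappa α k)
        + (θ - α / 2) * (∑ k ∈ Finset.range n, kappa α k) := by
  induction n with
  | zero => simp [omegaCoeff, kappa, genBinom]
  | succ m ih =>
    rw [Finset.sum_range_succ, ih,
      show omegaCoeff α θ (m + 1)
        = (1 + α / 2 - θ) * kappa α (m + 1) + (θ - α / 2) * kappa α m from rfl,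
      Finset.sum_range_succ (kappa α) (m + 1), Finset.sum_range_succ (kappa α) m]
    ring

/-- For `α ∈ (0,1)` and `θ ∈ [α/2 - (1-α)/(1+α), α/2]`, every partial sum
`∑_{k=0}^{n} ω_k` is positive. -/
theorem stmt7 (α θ : ℝ) (hα : α ∈ Set.Ioo (0 : ℝ) 1)
    (hθ : θ ∈ Set.Icc (α / 2 - (1 - α) / (1 + α)) (α / 2)) :
    ∀ n : ℕ, 0 < ∑ k ∈ Finset.range (n + 1), omegaCoeff α θ k := by
  obtain ⟨hα0, hα1⟩ := hα
  obtain ⟨hθ1, hθ2⟩ := hθ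
  set c : ℝ := α / 2 - θ with hc
  have hc0 : 0 ≤ c := by simp [hc]; linarith
  have h1α : (0 : ℝ) < 1 + α := by linarith
  have hc1 : c * (1 + α) ≤ 1 - α := by
    have hle : c ≤ (1 - α) / (1 + α) := by simp [hc]; linarith
    calc c * (1 + α) ≤ (1 - α) / (1 + α) * (1 + α) := by
          exact mul_le_mul_of_nonneg_right hle h1α.le
      _ = 1 - α := by field_simp
  intro n
  rw [sum_omega, sum_kappa]
  cases n with
  | zero =>
    simp only [Finset.range_zero, Finset.sum_empty, mul_zero, add_zero]
    have : Kprod α 0 = 1 := by simp [Kprod]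
    rw [this]
    nlinarith
  | succ m =>
    rw [sum_kappa α m, Kprod_succ]
    have hK : 0 < Kprod α m := Kprod_pos hα1 m
    have hm : (0 : ℝ) < (m : ℝ) + 1 := by positivity
    have key : 0 < (m : ℝ) + 1 - α - c * α := by
      have h1 : c * α ≤ c := by nlinarith
      have h2 : (0 : ℝ) ≤ (m : ℝ) := Nat.cast_nonneg m
      nlinarith
    have heq : (1 + α / 2 - θ) * (Kprod α m * (((m : ℝ) + 1 - α) / ((m : ℝ) + 1)))
        + (θ - α / 2) * Kprod α m
        = Kprod α m * (((m : ℝ) + 1 - α - c * α) / ((m : ℝ) + 1)) := by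
      simp only [hc]
      field_simp
      ring
    rw [heq]
    exact mul_pos hK (div_pos key hm)
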